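/- Suppose c ≠ 0 and let M : [0,∞) → ℝ satisfy M(t)/t → 0 as t → ∞. Define u(t) = Σ_{n≥1} exp(−λ_n t + ∫_0^t [α(r(s)) − (1/2)β(r(s))²] ds + M(t)) c_n e_n for t ≥ 0. Then limsup_{t→∞} (1/t) log ‖u(t)‖ ≤ −(λ_1 − Σ_{j=1}^N π_j (α_j − (1/2)β_j²)), where λ_1 is the first (smallest) term of the nondecreasing sequence λ. In particular, ‖u(t)‖ converges exponentially to zero whenever λ_1 > Σ_{j=1}^N π_j (α_j − (1/2)β_j²). -/

import Mathlib

open Filter MeasureTheory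
open scoped BigOperators

/-- for any square-summable `c ≠ 0` and `M(t)/t → 0`,
`limsup_{t→∞} (1/t) log ‖u(t)‖ ≤ −(λ_1 − Σ_j π_j (α_j − β_j²/2))` (with `λ_1 = lam 0` the
first term of the nondecreasing sequence), and `‖u(t)‖` converges exponentially to zero
whenever `λ_1 > Σ_j π_j (α_j − β_j²/2)`. -/
theorem sample_lyapunov_upper_bound_hybrid
    {H : Type*} [NormedAddCommGroup H] [InnerProductSpace ℝ H] [CompleteSpace H]
    (b : HilbertBasis ℕ ℝ H)
    (lam : ℕ → ℝ) (hlam : Monotone lam)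
    (c : ℕ → ℝ) (hc : Summable (fun n => c n ^ 2)) (hc0 : c ≠ 0)
    {N : ℕ} (r : ℝ → Fin N) (hr : Measurable r)
    (α β : Fin N → ℝ)
    (pp : Fin N → ℝ) (hpp : ∀ i, 0 ≤ pp i) (hppsum : ∑ i, pp i = 1)
    (hocc : ∀ i, Tendsto
      (fun t : ℝ => (1 / t) * ∫ s in (0:ℝ)..t, (if r s = i then (1:ℝ) else 0))
      atTop (nhds (pp i)))
    (M : ℝ → ℝ) (hM : Tendsto (fun t : ℝ => M t / t) atTop (nhds 0))
    (u : ℝ → H)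
    (hu : ∀ t : ℝ, u t =
      ∑' n : ℕ, (Real.exp (-lam n * t +
        (∫ s in (0:ℝ)..t, (α (r s) - (1 / 2) * β (r s) ^ 2)) + M t) * c n) • (b n : H)) :
    limsup (fun t : ℝ => (1 / t) * Real.log ‖u t‖) atTop
        ≤ -(lam 0 - ∑ j, pp j * (α j - (1 / 2) * β j ^ 2)) ∧
    (∑ j, pp j * (α j - (1 / 2) * β j ^ 2) < lam 0 →
      ∃ γ > (0:ℝ), ∃ C : ℝ, ∀ᶠ t in atTop, ‖u t‖ ≤ C * Real.exp (-γ * t)) := by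
  classical
  set φ : Fin N → ℝ := fun j => α j - (1 / 2) * β j ^ 2 with hφdef
  set S : ℝ := ∑ j, pp j * φ j with hSdef
  obtain ⟨n0, hn0⟩ : ∃ n, c n ≠ 0 := by
    by_contra h; push_neg at h; exact hc0 (funext h)
  set K : ℝ := Real.sqrt (∑' n, c n ^ 2) with hKdef
  have htsum_nonneg : (0:ℝ) ≤ ∑' n, c n ^ 2 :=
    tsum_nonneg fun n => sq_nonneg _
  have htsum_pos : (0:ℝ) < ∑' n, c n ^ 2 :=
    Summable.tsum_pos hc (fun n => sq_nonneg _) n0 (by positivity)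
  have hKpos : 0 < K := Real.sqrt_pos.mpr htsum_pos
  set Itg : ℝ → ℝ := fun t => ∫ s in (0:ℝ)..t, φ (r s) with hItgdef
  set E : ℝ → ℝ := fun t => Itg t + M t with hEdef
  -- key norm estimates
  have key : ∀ t : ℝ, 0 ≤ t →
      Real.exp (-lam n0 * t + E t) * |c n0| ≤ ‖u t‖ ∧
      ‖u t‖ ≤ Real.exp (-lam 0 * t + E t) * K := by
    intro t ht
    set a : ℕ → ℝ := fun n => Real.exp (-lam n * t + E t) * c n with hadef
    have hbound : ∀ n, ‖a n‖ ^ 2 ≤ Real.exp (-lam 0 * t + E t) ^ 2 * c n ^ 2 := by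
      intro n
      have hexp : Real.exp (-lam n * t + E t) ≤ Real.exp (-lam 0 * t + E t) := by
        apply Real.exp_le_exp.mpr
        have : lam 0 * t ≤ lam n * t :=
          mul_le_mul_of_nonneg_right (hlam (Nat.zero_le n)) ht
        linarith
      have h1 : ‖a n‖ ^ 2 = Real.exp (-lam n * t + E t) ^ 2 * c n ^ 2 := by
        rw [hadef]; rw [Real.norm_eq_abs, sq_abs]; ring
      rw [h1]
      apply mul_le_mul_of_nonneg_right _ (sq_nonneg _)
      exact pow_le_pow_left₀ (Real.exp_nonneg _) hexp 2
    have hsumm : Summable fun n => ‖a n‖ ^ 2 :=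
      Summable.of_nonneg_of_le (fun n => by positivity) hbound (hc.mul_left _)
    have hmem : Memℓp a 2 := by
      apply memℓp_gen
      have h2 : (2 : ENNReal).toReal = (2:ℝ) := by norm_num
      rw [h2]
      have : ∀ n, ‖a n‖ ^ (2:ℝ) = ‖a n‖ ^ (2:ℕ) := fun n => by
        rw [← Real.rpow_natCast]; norm_num
      simpa [this] using hsumm
    set f : lp (fun _ : ℕ => ℝ) 2 := ⟨a, hmem⟩ with hfdef
    have hexp : ∀ n : ℕ, (-lam n * t +
        (∫ s in (0:ℝ)..t, (α (r s) - (1 / 2) * β (r s) ^ 2)) + M t)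
        = -lam n * t + E t := by
      intro n
      have hI : Itg t = ∫ s in (0:ℝ)..t, (α (r s) - (1 / 2) * β (r s) ^ 2) := rfl
      simp only [hEdef]
      rw [hI]; ring
    have huf : u t = b.repr.symm f := by
      rw [hu t]
      have hs := (b.hasSum_repr_symm f).tsum_eq
      simp only [hexp]
      exact hs
    have hnorm : ‖u t‖ = ‖f‖ := by
      rw [huf]; exact (b.repr.symm.norm_map f)
    constructor
    · -- lower bound
      have h1 : ‖(f : ∀ _ : ℕ, ℝ) n0‖ ≤ ‖f‖ :=
        lp.norm_apply_le_norm (by norm_num) f n0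
      have h2 : ‖(f : ∀ _ : ℕ, ℝ) n0‖ = Real.exp (-lam n0 * t + E t) * |c n0| := by
        show ‖a n0‖ = _
        rw [Real.norm_eq_abs, hadef, abs_mul, abs_of_pos (Real.exp_pos _)]
      rw [hnorm]; rw [← h2]; exact h1
    · -- upper bound
      have htoReal : (0:ℝ) < (2 : ENNReal).toReal := by norm_num
      have h1 := lp.norm_rpow_eq_tsum htoReal f
      have h2 : (2 : ENNReal).toReal = (2:ℝ) := by norm_num
      rw [h2] at h1
      have hrpow : ∀ x : ℝ, 0 ≤ x → x ^ (2:ℝ) = x ^ (2:ℕ) := fun x hx => by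
        rw [← Real.rpow_natCast]; norm_num
      have h3 : ‖f‖ ^ (2:ℕ) = ∑' n, ‖a n‖ ^ (2:ℕ) := by
        rw [← hrpow _ (norm_nonneg f), h1]
        congr 1; funext n; exact hrpow _ (norm_nonneg _)
      have h4 : ∑' n, ‖a n‖ ^ (2:ℕ) ≤
          Real.exp (-lam 0 * t + E t) ^ 2 * ∑' n, c n ^ 2 := by
        rw [← tsum_mul_left]
        exact Summable.tsum_le_tsum hbound hsumm (hc.mul_left _)
      have h5 : Real.exp (-lam 0 * t + E t) ^ 2 * ∑' n, c n ^ 2 =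
          (Real.exp (-lam 0 * t + E t) * K) ^ 2 := by
        rw [mul_pow, hKdef, Real.sq_sqrt htsum_nonneg]
      have h6 : ‖f‖ ^ (2:ℕ) ≤ (Real.exp (-lam 0 * t + E t) * K) ^ 2 := by
        rw [h3]; rw [h5] at h4; exact h4
      rw [hnorm]
      exact (pow_le_pow_iff_left₀ (norm_nonneg _) (by positivity) two_ne_zero).mp h6
  have hupos : ∀ t : ℝ, 0 ≤ t → 0 < ‖u t‖ := fun t ht =>
    lt_of_lt_of_le (by positivity) (key t ht).1
  -- occupation limit
  have hint : ∀ (i : Fin N) (t : ℝ),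
      IntervalIntegrable (fun s => if r s = i then (1:ℝ) else 0) volume 0 t := by
    intro i t
    have hmeas : Measurable fun s : ℝ => if r s = i then (1:ℝ) else 0 :=
      Measurable.ite (hr (measurableSet_singleton i)) measurable_const measurable_const
    constructor <;>
    · apply Measure.integrableOn_of_bounded measure_Ioc_lt_top.ne
        hmeas.aestronglyMeasurable (M := 1)
      filter_upwards with s
      by_cases h : r s = i <;> simp [h]
  have hrep : ∀ t : ℝ, Itg t =
      ∑ j, φ j * ∫ s in (0:ℝ)..t, (if r s = j then (1:ℝ) else 0) := by
    intro t
    have h1 : ∀ s, φ (r s) = ∑ j, φ j * (if r s = j then (1:ℝ) else 0) := by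
      intro s
      rw [Finset.sum_congr rfl (fun j _ => by
        rw [mul_ite, mul_one, mul_zero])]
      rw [Finset.sum_ite_eq]
      simp
    rw [hItgdef]
    simp only [h1]
    rw [intervalIntegral.integral_finset_sum
      (fun j _ => (hint j t).const_mul (φ j))]
    exact Finset.sum_congr rfl fun j _ => intervalIntegral.integral_const_mul _ _
  have hItg_lim : Tendsto (fun t : ℝ => (1 / t) * Itg t) atTop (nhds S) := by
    have h1 : Tendsto (fun t : ℝ =>
        ∑ j, φ j * ((1 / t) * ∫ s in (0:ℝ)..t, (if r s = j then (1:ℝ) else 0)))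
        atTop (nhds (∑ j, φ j * pp j)) :=
      tendsto_finset_sum _ fun j _ => (hocc j).const_mul (φ j)
    have h2 : S = ∑ j, φ j * pp j :=
      Finset.sum_congr rfl fun j _ => mul_comm _ _
    rw [h2]
    apply h1.congr
    intro t
    rw [hrep t, Finset.mul_sum]
    exact Finset.sum_congr rfl fun j _ => by ring
  have hinv : Tendsto (fun t : ℝ => 1 / t) atTop (nhds 0) := by
    simpa [one_div] using (tendsto_inv_atTop_zero (𝕜 := ℝ))
  -- comparison functions
  set g : ℝ → ℝ := fun t => -lam 0 + (1 / t) * Itg t + M t / t + Real.log K * (1 / t)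
    with hgdef
  have hg : Tendsto g atTop (nhds (-(lam 0 - S))) := by
    have h : Tendsto g atTop (nhds (-lam 0 + S + 0 + Real.log K * 0)) :=
      ((((tendsto_const_nhds).add hItg_lim).add hM).add (hinv.const_mul _))
    have he : -lam 0 + S + 0 + Real.log K * 0 = -(lam 0 - S) := by ring
    rw [← he]; exact h
  set gl : ℝ → ℝ := fun t => -lam n0 + (1 / t) * Itg t + M t / t
      + Real.log |c n0| * (1 / t) with hgldef
  have hgl : Tendsto gl atTop (nhds (-lam n0 + S)) := by
    have h : Tendsto gl atTop (nhds (-lam n0 + S + 0 + Real.log |c n0| * 0)) :=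
      ((((tendsto_const_nhds).add hItg_lim).add hM).add (hinv.const_mul _))
    have he : -lam n0 + S + 0 + Real.log |c n0| * 0 = -lam n0 + S := by ring
    rw [← he]; exact h
  have hfg : ∀ᶠ t in atTop, (1 / t) * Real.log ‖u t‖ ≤ g t := by
    filter_upwards [eventually_ge_atTop (1:ℝ)] with t ht
    have ht0 : (0:ℝ) < t := lt_of_lt_of_le one_pos ht
    have hlog : Real.log ‖u t‖ ≤ (-lam 0 * t + E t) + Real.log K := by
      calc Real.log ‖u t‖ ≤ Real.log (Real.exp (-lam 0 * t + E t) * K) :=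
            Real.log_le_log (hupos t ht0.le) (key t ht0.le).2
        _ = (-lam 0 * t + E t) + Real.log K := by
            rw [Real.log_mul (Real.exp_ne_zero _) hKpos.ne', Real.log_exp]
    have := mul_le_mul_of_nonneg_left hlog (le_of_lt (one_div_pos.mpr ht0))
    calc (1 / t) * Real.log ‖u t‖ ≤ (1 / t) * ((-lam 0 * t + E t) + Real.log K) := this
      _ = g t := by
          rw [hgdef, hEdef]
          field_simp
          ring
  have hglf : ∀ᶠ t in atTop, gl t ≤ (1 / t) * Real.log ‖u t‖ := by
    filter_upwards [eventually_ge_atTop (1:ℝ)] with t ht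
    have ht0 : (0:ℝ) < t := lt_of_lt_of_le one_pos ht
    have hlog : (-lam n0 * t + E t) + Real.log |c n0| ≤ Real.log ‖u t‖ := by
      calc (-lam n0 * t + E t) + Real.log |c n0|
          = Real.log (Real.exp (-lam n0 * t + E t) * |c n0|) := by
            rw [Real.log_mul (Real.exp_ne_zero _) (abs_ne_zero.mpr hn0), Real.log_exp]
        _ ≤ Real.log ‖u t‖ :=
            Real.log_le_log (by positivity) (key t ht0.le).1
    have := mul_le_mul_of_nonneg_left hlog (le_of_lt (one_div_pos.mpr ht0))
    calc gl t = (1 / t) * ((-lam n0 * t + E t) + Real.log |c n0|) := by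
          rw [hgldef, hEdef]; field_simp; ring
      _ ≤ (1 / t) * Real.log ‖u t‖ := this
  have hbdd_le : IsBoundedUnder (· ≤ ·) atTop
      (fun t : ℝ => (1 / t) * Real.log ‖u t‖) :=
    (hg.isBoundedUnder_le).mono_le hfg
  have hbdd_ge : IsBoundedUnder (· ≥ ·) atTop
      (fun t : ℝ => (1 / t) * Real.log ‖u t‖) :=
    (hgl.isBoundedUnder_ge).mono_ge hglf
  have hmain : limsup (fun t : ℝ => (1 / t) * Real.log ‖u t‖) atTop
      ≤ -(lam 0 - S) := by
    calc limsup (fun t : ℝ => (1 / t) * Real.log ‖u t‖) atTop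
        ≤ limsup g atTop :=
          limsup_le_limsup hfg hbdd_ge.isCoboundedUnder_le hg.isBoundedUnder_le
      _ = -(lam 0 - S) := hg.limsup_eq
  refine ⟨hmain, fun hlt => ?_⟩
  set γ : ℝ := (lam 0 - S) / 2 with hγdef
  have hγpos : 0 < γ := by rw [hγdef]; linarith
  have hlimsup_lt : limsup (fun t : ℝ => (1 / t) * Real.log ‖u t‖) atTop < -γ := by
    apply lt_of_le_of_lt hmain
    rw [hγdef]; linarith
  have hev := eventually_lt_of_limsup_lt hlimsup_lt hbdd_le
  refine ⟨γ, hγpos, 1, ?_⟩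
  filter_upwards [hev, eventually_ge_atTop (1:ℝ)] with t hft ht
  have ht0 : (0:ℝ) < t := lt_of_lt_of_le one_pos ht
  have hL : Real.log ‖u t‖ < -γ * t := by
    rw [one_div] at hft
    rw [inv_mul_lt_iff₀ ht0] at hft
    linarith [hft]
  calc ‖u t‖ = Real.exp (Real.log ‖u t‖) := (Real.exp_log (hupos t ht0.le)).symm
    _ ≤ Real.exp (-γ * t) := Real.exp_le_exp.mpr hL.le
    _ = 1 * Real.exp (-γ * t) := (one_mul _).symm
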